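/- Verification of the quantum Price relation for the quadratic-exponential moment: let g(μ,Σ) = exp(−(1/2)μᵀΨμ)/√(det(Iₙ + ΣΠ)) with Ψ = (Π⁻¹ + Σ)⁻¹, for Π, Σ positive definite symmetric. Then the Hessian of g with respect to μ equals g·(Ψμμᵀ Ψ − Ψ), and the Fréchet derivative of g with respect to Σ in symmetric direction H equals (1/2)g·⟨Ψμμᵀ Ψ − Ψ, H⟩; hence ∂_μ² g = 2 ∂_Σ g. -/

import Mathlib

open Matrix

def symMatrices (n : ℕ) : Submodule ℝ (Matrix (Fin n) (Fin n) ℝ) where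
  carrier := {A | A.IsSymm}
  add_mem' := fun ha hb => ha.add hb
  zero_mem' := Matrix.isSymm_zero
  smul_mem' := fun c _ hA => hA.smul c

lemma Matrix.PosDef.mem_symMatrices {n : ℕ} {S : Matrix (Fin n) (Fin n) ℝ}
    (h : S.PosDef) : S ∈ symMatrices n := by
  have hh := h.isHermitian
  rw [Matrix.IsHermitian, Matrix.conjTranspose_eq_transpose_of_trivial] at hh
  exact hh

attribute [local instance] Matrix.normedAddCommGroup Matrix.normedSpace
noncomputable def hessianMatrix {n : ℕ} (f : (Fin n → ℝ) → ℝ) (x : Fin n → ℝ) :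
    Matrix (Fin n) (Fin n) ℝ :=
  Matrix.of fun i j => fderiv ℝ (fun y => fderiv ℝ f y (Pi.single j 1)) x (Pi.single i 1)

/-- The closed-form quadratic-exponential moment
`g(μ,Σ) = exp(-(1/2)μᵀΨμ)/sqrt(det(I + ΣΠ))`, `Ψ = (Π⁻¹+Σ)⁻¹`. -/
noncomputable def gQE {n : ℕ} (P : Matrix (Fin n) (Fin n) ℝ) (μ : Fin n → ℝ)
    (A : Matrix (Fin n) (Fin n) ℝ) : ℝ :=
  Real.exp (-(1 / 2 : ℝ) * (μ ⬝ᵥ ((P⁻¹ + A)⁻¹ *ᵥ μ))) / Real.sqrt ((1 + A * P).det)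



section bilin
variable {E F G X : Type*} [NormedAddCommGroup E] [NormedSpace ℝ E]
  [NormedAddCommGroup F] [NormedSpace ℝ F] [NormedAddCommGroup G] [NormedSpace ℝ G]
  [NormedAddCommGroup X] [NormedSpace ℝ X]
  [FiniteDimensional ℝ E] [FiniteDimensional ℝ F]

noncomputable def bilinCLM (B : E →ₗ[ℝ] F →ₗ[ℝ] G) : E →L[ℝ] F →L[ℝ] G :=
  LinearMap.toContinuousLinearMap
    { toFun := fun x => LinearMap.toContinuousLinearMap (B x)
      map_add' := by intro x y; ext z; simp
      map_smul' := by intro c x; ext z; simp }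

@[simp] lemma bilinCLM_apply (B : E →ₗ[ℝ] F →ₗ[ℝ] G) (x : E) (y : F) :
    bilinCLM B x y = B x y := rfl

lemma HasFDerivAt.bilin (B : E →ₗ[ℝ] F →ₗ[ℝ] G) {f : X → E} {g : X → F}
    {f' : X →L[ℝ] E} {g' : X →L[ℝ] F} {x : X}
    (hf : HasFDerivAt f f' x) (hg : HasFDerivAt g g' x) :
    HasFDerivAt (fun y => B (f y) (g y))
      (((bilinCLM B).isBoundedBilinearMap.deriv (f x, g x)).comp (f'.prod g')) x := by
  exact ((bilinCLM B).isBoundedBilinearMap.hasFDerivAt (f x, g x)).comp x (hf.prodMk hg)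

lemma bilin_deriv_apply (B : E →ₗ[ℝ] F →ₗ[ℝ] G) {f' : X →L[ℝ] E} {g' : X →L[ℝ] F}
    (p : E × F) (v : X) :
    (((bilinCLM B).isBoundedBilinearMap.deriv p).comp (f'.prod g')) v
      = B p.1 (g' v) + B (f' v) p.2 := rfl
end bilin

noncomputable def cDet (n : ℕ) : ContinuousMultilinearMap ℝ (fun _ : Fin n => (Fin n → ℝ)) ℝ :=
  MultilinearMap.mkContinuous (Matrix.detRowAlternating : _).toMultilinearMap
    (Nat.factorial n) (by
      intro m
      have h : (Matrix.detRowAlternating (R := ℝ) (n := Fin n)).toMultilinearMap m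
          = Matrix.det (Matrix.of m) := rfl
      rw [h, Matrix.det_apply]
      refine (Finset.abs_sum_le_sum_abs _ _).trans ?_
      have hb : ∀ σ : Equiv.Perm (Fin n), |(Equiv.Perm.sign σ : ℤ) • ∏ i, Matrix.of m (σ i) i|
          ≤ ∏ i, ‖m i‖ := by
        intro σ
        rw [zsmul_eq_mul, abs_mul]
        have h1 : |((Equiv.Perm.sign σ : ℤ) : ℝ)| = 1 := by
          rcases Int.units_eq_one_or (Equiv.Perm.sign σ) with h | h <;> simp [h]
        rw [h1, one_mul, Finset.abs_prod]
        have key : ∏ i, |Matrix.of m (σ i) i| ≤ ∏ i, ‖m (σ i)‖ :=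
          Finset.prod_le_prod (fun i _ => abs_nonneg _)
            (fun i _ => norm_le_pi_norm (m (σ i)) i)
        exact key.trans_eq (Equiv.prod_comp σ (fun i => ‖m i‖))
      refine (Finset.sum_le_sum (fun σ _ => hb σ)).trans_eq ?_
      rw [Finset.sum_const, Finset.card_univ, Fintype.card_perm, nsmul_eq_mul,
        Fintype.card_fin])

lemma cDet_apply {n : ℕ} (A : Matrix (Fin n) (Fin n) ℝ) : cDet n (fun i => A i) = A.det := rfl

noncomputable def traceMulCLM {n : ℕ} (B : Matrix (Fin n) (Fin n) ℝ) :
    Matrix (Fin n) (Fin n) ℝ →L[ℝ] ℝ :=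
  LinearMap.toContinuousLinearMap
    { toFun := fun H => (B * H).trace
      map_add' := by intro x y; simp [Matrix.mul_add]
      map_smul' := by intro c x; simp [Matrix.mul_smul] }

@[simp] lemma traceMulCLM_apply {n : ℕ} (B H : Matrix (Fin n) (Fin n) ℝ) :
    traceMulCLM B H = (B * H).trace := rfl

lemma det_updateRow_eq_sum {n : ℕ} (A : Matrix (Fin n) (Fin n) ℝ) (i : Fin n) (v : Fin n → ℝ) :
    (A.updateRow i v).det = ∑ j, v j * A.adjugate j i := by
  have hv : v = ∑ j, (v j) • (Pi.single j 1 : Fin n → ℝ) := by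
    ext k; simp [Pi.single_apply]
  have h1 : (A.updateRow i v).det
      = (Matrix.detRowAlternating : AlternatingMap ℝ (Fin n → ℝ) ℝ (Fin n)).toMultilinearMap
          (Function.update (fun j => A j) i v) := rfl
  rw [h1]
  conv_lhs => rw [hv]
  rw [MultilinearMap.map_update_sum]
  refine Finset.sum_congr rfl (fun j _ => ?_)
  rw [MultilinearMap.map_update_smul]
  rw [smul_eq_mul]
  congr 1
  exact (Matrix.adjugate_apply A j i).symm

lemma hasFDerivAt_det {n : ℕ} (A : Matrix (Fin n) (Fin n) ℝ) :
    HasFDerivAt Matrix.det (traceMulCLM A.adjugate) A := by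
  have h : HasFDerivAt Matrix.det ((cDet n).linearDeriv (fun i => A i)) A :=
    (cDet n).hasFDerivAt (fun i => A i)
  have heq : traceMulCLM A.adjugate = (cDet n).linearDeriv (fun i => A i) := by
    ext H
    refine Eq.trans ?_ (ContinuousMultilinearMap.linearDeriv_apply (cDet n) (fun i => A i) H).symm
    have h3 : ∀ i : Fin n, cDet n (Function.update (fun j => A j) i (H i))
        = (A.updateRow i (H i)).det := fun i => rfl
    simp only [h3, det_updateRow_eq_sum]
    rw [traceMulCLM_apply, Matrix.trace]
    simp only [Matrix.diag, Matrix.mul_apply]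
    rw [Finset.sum_comm]
    exact Finset.sum_congr rfl fun i _ => Finset.sum_congr rfl fun j _ => (mul_comm _ _)
  rw [heq]
  exact h

section inverse
variable {n : ℕ}

local notation "Mat" => Matrix (Fin n) (Fin n) ℝ

lemma differentiableAt_matrix {X : Type*} [NormedAddCommGroup X] [NormedSpace ℝ X]
    {f : X → Mat} {x : X} (h : ∀ i j, DifferentiableAt ℝ (fun y => f y i j) x) :
    DifferentiableAt ℝ f x := by
  have : DifferentiableAt ℝ (fun y => (fun i j => f y i j : Fin n → Fin n → ℝ)) x := by
    apply differentiableAt_pi.2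
    intro i
    apply differentiableAt_pi.2
    intro j
    exact h i j
  exact this

noncomputable def entryCLM (k l : Fin n) : Mat →L[ℝ] ℝ :=
  LinearMap.toContinuousLinearMap
    { toFun := fun A => A k l
      map_add' := by intro x y; rfl
      map_smul' := by intro c x; rfl }

@[simp] lemma entryCLM_apply (k l : Fin n) (A : Mat) : entryCLM k l A = A k l := rfl

lemma differentiableAt_entry (k l : Fin n) (A : Mat) :
    DifferentiableAt ℝ (fun B : Mat => B k l) A :=
  (entryCLM k l).differentiableAt

lemma differentiableAt_updateRow (j : Fin n) (c : Fin n → ℝ) (A : Mat) :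
    DifferentiableAt ℝ (fun B : Mat => B.updateRow j c) A := by
  apply differentiableAt_matrix
  intro k l
  by_cases hk : k = j
  · simp only [Matrix.updateRow_apply, hk, if_true]
    exact differentiableAt_const _
  · simp only [Matrix.updateRow_apply, hk, if_false]
    exact differentiableAt_entry k l A

lemma differentiableAt_adjugate (A : Mat) :
    DifferentiableAt ℝ (fun B : Mat => B.adjugate) A := by
  apply differentiableAt_matrix
  intro i j
  have h : (fun B : Mat => B.adjugate i j)
      = fun B : Mat => (B.updateRow j (Pi.single i 1)).det := by
    funext B; exact Matrix.adjugate_apply B i j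
  rw [h]
  exact ((hasFDerivAt_det _).differentiableAt).comp A (differentiableAt_updateRow j _ A)

lemma differentiableAt_detfun (A : Mat) : DifferentiableAt ℝ Matrix.det A :=
  (hasFDerivAt_det A).differentiableAt

lemma inv_eq_global (A : Mat) : A⁻¹ = (A.det)⁻¹ • A.adjugate := by
  rw [Matrix.inv_def, Ring.inverse_eq_inv']

lemma differentiableAt_matInv {A : Mat} (hA : A.det ≠ 0) :
    DifferentiableAt ℝ (fun B : Mat => B⁻¹) A := by
  have h : (fun B : Mat => B⁻¹) = fun B : Mat => (B.det)⁻¹ • B.adjugate := by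
    funext B; exact inv_eq_global B
  rw [h]
  exact (((differentiableAt_detfun A).inv hA)).smul (differentiableAt_adjugate A)

noncomputable def invDerivCLM (S : Mat) : Mat →L[ℝ] Mat :=
  LinearMap.toContinuousLinearMap
    { toFun := fun H => -(S⁻¹ * H * S⁻¹)
      map_add' := by intro x y; simp [Matrix.mul_add, Matrix.add_mul]; noncomm_ring
      map_smul' := by intro c x; simp [Matrix.mul_smul, Matrix.smul_mul] }

@[simp] lemma invDerivCLM_apply (S H : Mat) : invDerivCLM S H = -(S⁻¹ * H * S⁻¹) := rfl

lemma hasFDerivAt_matInv {S : Mat} (hS : S.det ≠ 0) :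
    HasFDerivAt (fun B : Mat => B⁻¹) (invDerivCLM S) S := by
  have hdiff := differentiableAt_matInv hS
  have hD := hdiff.hasFDerivAt
  set D := fderiv ℝ (fun B : Mat => B⁻¹) S with hDdef
  -- F B = B⁻¹ * B is eventually 1 near S
  have hopen : IsOpen {B : Mat | B.det ≠ 0} := by
    have hd : Differentiable ℝ (Matrix.det : Mat → ℝ) := fun B => differentiableAt_detfun B
    have : Continuous (Matrix.det : Mat → ℝ) := hd.continuous
    exact isOpen_compl_iff.mpr (isClosed_singleton.preimage this)
  have hmem : {B : Mat | B.det ≠ 0} ∈ nhds S := hopen.mem_nhds hS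
  have hF : (fun B : Mat => B⁻¹ * B) =ᶠ[nhds S] (fun _ => (1 : Mat)) := by
    filter_upwards [hmem] with B hB
    exact Matrix.nonsing_inv_mul B (isUnit_iff_ne_zero.mpr hB)
  have hFderiv : HasFDerivAt (fun B : Mat => B⁻¹ * B)
      ((((bilinCLM (LinearMap.mul ℝ Mat)).isBoundedBilinearMap.deriv (S⁻¹, S)).comp
        (D.prod (ContinuousLinearMap.id ℝ Mat)))) S :=
    HasFDerivAt.bilin (LinearMap.mul ℝ Mat) hD (hasFDerivAt_id S)
  have hzero : ((((bilinCLM (LinearMap.mul ℝ Mat)).isBoundedBilinearMap.deriv (S⁻¹, S)).comp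
        (D.prod (ContinuousLinearMap.id ℝ Mat)))) = 0 := by
    have h1 : HasFDerivAt (fun _ : Mat => (1 : Mat)) (0 : Mat →L[ℝ] Mat) S := hasFDerivAt_const (1 : Mat) S
    have h2 : HasFDerivAt (fun B : Mat => B⁻¹ * B) (0 : Mat →L[ℝ] Mat) S := h1.congr_of_eventuallyEq hF
    exact hFderiv.unique h2
  have hkey : ∀ H : Mat, S⁻¹ * H + D H * S = 0 := by
    intro H
    have h0 := ContinuousLinearMap.ext_iff.mp hzero H
    exact (bilin_deriv_apply (LinearMap.mul ℝ Mat) (f' := D) (g' := ContinuousLinearMap.id ℝ Mat) (S⁻¹, S) H).symm.trans h0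
  have hDeq : invDerivCLM S = D := by
    ext H : 1
    have h := hkey H
    have h2 : D H * S = -(S⁻¹ * H) := by linear_combination (norm := noncomm_ring) h
    have h3 : D H * S * S⁻¹ = -(S⁻¹ * H) * S⁻¹ := by rw [h2]
    rw [Matrix.mul_assoc, Matrix.mul_nonsing_inv S (isUnit_iff_ne_zero.mpr hS),
      Matrix.mul_one] at h3
    rw [invDerivCLM_apply, h3]
    noncomm_ring
  rw [hDeq]
  exact hD
end inverse

section mu
variable {n : ℕ}
local notation "Mat" => Matrix (Fin n) (Fin n) ℝ
local notation "V" => (Fin n → ℝ)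

def dotLin (Ψ : Mat) : V →ₗ[ℝ] V →ₗ[ℝ] ℝ where
  toFun x :=
    { toFun := fun y => x ⬝ᵥ (Ψ *ᵥ y)
      map_add' := by intro a b; simp [Matrix.mulVec_add, dotProduct_add]
      map_smul' := by intro c a; simp [Matrix.mulVec_smul, dotProduct_smul] }
  map_add' := by intro a b; ext y; simp [add_dotProduct]
  map_smul' := by intro c a; ext y; simp [smul_dotProduct]

@[simp] lemma dotLin_apply (Ψ : Mat) (x y : V) : dotLin Ψ x y = x ⬝ᵥ (Ψ *ᵥ y) := rfl

lemma dot_symm {Ψ : Mat} (hΨ : Ψᵀ = Ψ) (x y : V) : x ⬝ᵥ (Ψ *ᵥ y) = y ⬝ᵥ (Ψ *ᵥ x) := by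
  rw [Matrix.dotProduct_mulVec, ← Matrix.mulVec_transpose, hΨ, dotProduct_comm]

lemma mu_hasFDerivAt (P S : Mat) (hΨ : ((P⁻¹ + S)⁻¹)ᵀ = (P⁻¹ + S)⁻¹) (m : V) :
    HasFDerivAt (fun m' => gQE P m' S)
      ((-(gQE P m S)) • ((bilinCLM (dotLin ((P⁻¹ + S)⁻¹))).flip m)) m := by
  set Ψ : Mat := (P⁻¹ + S)⁻¹ with hΨdef
  have hq : HasFDerivAt (fun m' : V => dotLin Ψ m' m')
      ((((bilinCLM (dotLin Ψ)).isBoundedBilinearMap.deriv (m, m)).comp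
        ((ContinuousLinearMap.id ℝ V).prod (ContinuousLinearMap.id ℝ V)))) m :=
    HasFDerivAt.bilin (dotLin Ψ) (hasFDerivAt_id m) (hasFDerivAt_id m)
  have h1 : HasFDerivAt (fun m' : V => -(1/2 : ℝ) * (dotLin Ψ m' m'))
      ((-(1/2 : ℝ)) • (((bilinCLM (dotLin Ψ)).isBoundedBilinearMap.deriv (m, m)).comp
        ((ContinuousLinearMap.id ℝ V).prod (ContinuousLinearMap.id ℝ V)))) m :=
    hq.const_mul _
  have h2 := (Real.hasDerivAt_exp (-(1/2 : ℝ) * (dotLin Ψ m m))).comp_hasFDerivAt m h1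
  have h3 := h2.mul_const ((Real.sqrt ((1 + S * P).det))⁻¹)
  have hfun : (Real.exp ∘ (fun m' : V => -(1/2 : ℝ) * (dotLin Ψ m' m')))
      = fun m' : V => Real.exp (-(1/2 : ℝ) * (dotLin Ψ m' m')) := rfl
  rw [hfun] at h3
  have hfun2 : (fun m' : V => Real.exp (-(1/2 : ℝ) * (dotLin Ψ m' m'))
      * (Real.sqrt ((1 + S * P).det))⁻¹) = fun m' => gQE P m' S := by
    funext m'
    simp only [gQE, dotLin_apply, div_eq_mul_inv]
    rfl
  rw [hfun2] at h3
  refine h3.congr_fderiv ?_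
  ext h : 1
  simp only [ContinuousLinearMap.coe_smul', Pi.smul_apply, ContinuousLinearMap.coe_comp',
    Function.comp_apply, ContinuousLinearMap.smul_apply, ContinuousLinearMap.flip_apply,
    bilinCLM_apply, dotLin_apply]
  have hd' : ((bilinCLM (dotLin Ψ)).isBoundedBilinearMap.deriv (m, m))
      (((ContinuousLinearMap.id ℝ V).prod (ContinuousLinearMap.id ℝ V)) h)
      = m ⬝ᵥ (Ψ *ᵥ h) + h ⬝ᵥ (Ψ *ᵥ m) := rfl
  refine (congrArg (fun t : ℝ => (Real.sqrt ((1 + S * P).det))⁻¹ •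
    Real.exp (-(1/2 : ℝ) * (m ⬝ᵥ (Ψ *ᵥ m))) • (-(1/2 : ℝ)) • t) hd').trans ?_
  beta_reduce
  rw [dot_symm hΨ m h]
  have hg : gQE P m S = Real.exp (-(1/2 : ℝ) * (m ⬝ᵥ (Ψ *ᵥ m))) / Real.sqrt ((1 + S * P).det) :=
    rfl
  rw [hg]
  simp only [smul_eq_mul]
  ring

lemma mu_fderiv_eval (P S : Mat) (hΨ : ((P⁻¹ + S)⁻¹)ᵀ = (P⁻¹ + S)⁻¹) (m : V) (h₂ : V) :
    fderiv ℝ (fun m' => gQE P m' S) m h₂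
      = -(gQE P m S) * (h₂ ⬝ᵥ ((P⁻¹ + S)⁻¹ *ᵥ m)) := by
  rw [(mu_hasFDerivAt P S hΨ m).fderiv]
  simp

lemma mu_second_deriv (P S : Mat) (hΨ : ((P⁻¹ + S)⁻¹)ᵀ = (P⁻¹ + S)⁻¹) (μ : V) (h₁ h₂ : V) :
    fderiv ℝ (fun m => fderiv ℝ (fun m' => gQE P m' S) m h₂) μ h₁ =
      gQE P μ S *
        (h₁ ⬝ᵥ ((Matrix.vecMulVec ((P⁻¹ + S)⁻¹ *ᵥ μ) ((P⁻¹ + S)⁻¹ *ᵥ μ) -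
          (P⁻¹ + S)⁻¹) *ᵥ h₂)) := by
  set Ψ : Mat := (P⁻¹ + S)⁻¹ with hΨdef
  have hfun : (fun m => fderiv ℝ (fun m' => gQE P m' S) m h₂)
      = fun m => -(gQE P m S) * (h₂ ⬝ᵥ (Ψ *ᵥ m)) := by
    funext m; exact mu_fderiv_eval P S hΨ m h₂
  rw [hfun]
  -- product rule
  have hc : HasFDerivAt (fun m => -(gQE P m S))
      (-((-(gQE P μ S)) • ((bilinCLM (dotLin Ψ)).flip μ))) μ :=
    (mu_hasFDerivAt P S hΨ μ).neg
  have hd : HasFDerivAt (fun m : V => h₂ ⬝ᵥ (Ψ *ᵥ m)) ((bilinCLM (dotLin Ψ)) h₂) μ :=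
    ((bilinCLM (dotLin Ψ)) h₂).hasFDerivAt
  have hprod := hc.mul hd
  rw [show (fun m => -(gQE P m S) * (h₂ ⬝ᵥ (Ψ *ᵥ m))) = ((fun m => -(gQE P m S)) * fun m : V => h₂ ⬝ᵥ (Ψ *ᵥ m)) from rfl, hprod.fderiv]
  simp only [ContinuousLinearMap.add_apply, ContinuousLinearMap.coe_smul', Pi.smul_apply,
    ContinuousLinearMap.neg_apply, ContinuousLinearMap.smul_apply,
    ContinuousLinearMap.flip_apply, bilinCLM_apply, dotLin_apply, smul_eq_mul]
  rw [Matrix.sub_mulVec]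
  set v : V := Ψ *ᵥ μ with hv
  have hvv : Matrix.vecMulVec v v *ᵥ h₂ = (v ⬝ᵥ h₂) • v := by
    ext i
    simp only [Matrix.mulVec, Matrix.vecMulVec_apply, dotProduct, Pi.smul_apply, smul_eq_mul]
    rw [Finset.sum_mul]
    exact Finset.sum_congr rfl fun j _ => by ring
  rw [hvv]
  rw [dotProduct_sub, dotProduct_smul]
  have h12 : h₁ ⬝ᵥ (Ψ *ᵥ h₂) = h₂ ⬝ᵥ (Ψ *ᵥ h₁) := dot_symm hΨ h₁ h₂
  have h2m : h₂ ⬝ᵥ (Ψ *ᵥ μ) = (Ψ *ᵥ μ) ⬝ᵥ h₂ := dotProduct_comm _ _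
  rw [← h12, ← h2m]
  rw [smul_eq_mul]
  ring
end mu

section sigma
variable {n : ℕ}
local notation "Mat" => Matrix (Fin n) (Fin n) ℝ
local notation "V" => (Fin n → ℝ)

noncomputable def vecQuadCLM (μ : V) : Mat →L[ℝ] ℝ :=
  LinearMap.toContinuousLinearMap
    { toFun := fun X => μ ⬝ᵥ (X *ᵥ μ)
      map_add' := by intro x y; simp [Matrix.add_mulVec, dotProduct_add]
      map_smul' := by intro c x; simp [Matrix.smul_mulVec, dotProduct_smul] }

@[simp] lemma vecQuadCLM_apply (μ : V) (X : Mat) : vecQuadCLM μ X = μ ⬝ᵥ (X *ᵥ μ) := rfl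

noncomputable def mulRightCLM (P : Mat) : Mat →L[ℝ] Mat :=
  LinearMap.toContinuousLinearMap
    { toFun := fun H => H * P
      map_add' := by intro x y; simp [Matrix.add_mul]
      map_smul' := by intro c x; simp [Matrix.smul_mul] }

@[simp] lemma mulRightCLM_apply (P H : Mat) : mulRightCLM P H = H * P := rfl

noncomputable def sigCLM (P : Mat) (μ : V) (S : Mat) : Mat →L[ℝ] ℝ :=
  LinearMap.toContinuousLinearMap
    { toFun := fun H => (1 / 2 : ℝ) * gQE P μ S *
        ((Matrix.vecMulVec ((P⁻¹ + S)⁻¹ *ᵥ μ) ((P⁻¹ + S)⁻¹ *ᵥ μ) - (P⁻¹ + S)⁻¹) * H).trace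
      map_add' := by intro x y; simp [Matrix.mul_add, Matrix.trace_add, mul_add]
      map_smul' := by intro c x; simp [Matrix.mul_smul, Matrix.trace_smul]; ring }

@[simp] lemma sigCLM_apply (P : Mat) (μ : V) (S H : Mat) :
    sigCLM P μ S H = (1 / 2 : ℝ) * gQE P μ S *
      ((Matrix.vecMulVec ((P⁻¹ + S)⁻¹ *ᵥ μ) ((P⁻¹ + S)⁻¹ *ᵥ μ) - (P⁻¹ + S)⁻¹) * H).trace :=
  rfl

lemma trace_vecMulVec_mul (v : V) (H : Mat) :
    (Matrix.vecMulVec v v * H).trace = v ⬝ᵥ (H *ᵥ v) := by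
  rw [Matrix.trace]
  simp only [Matrix.diag, Matrix.mul_apply, Matrix.vecMulVec_apply, dotProduct, Matrix.mulVec]
  rw [Finset.sum_comm]
  refine Finset.sum_congr rfl fun j _ => ?_
  rw [Finset.mul_sum]
  refine Finset.sum_congr rfl fun i _ => by ring

lemma sigma_hasFDerivAt (P : Mat) (μ : V) (S : Mat)
    (hX : (P⁻¹ + S).det ≠ 0) (hP : P.det ≠ 0) (hδ : 0 < (1 + S * P).det)
    (hΨ : ((P⁻¹ + S)⁻¹)ᵀ = (P⁻¹ + S)⁻¹) :
    HasFDerivAt (fun A : Mat => gQE P μ A) (sigCLM P μ S) S := by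
  set X : Mat := P⁻¹ + S with hXdef
  set Ψ : Mat := X⁻¹
  set v : V := Ψ *ᵥ μ with hv
  set δ : ℝ := (1 + S * P).det with hδdef
  have hs : Real.sqrt δ ≠ 0 := (Real.sqrt_pos.mpr hδ).ne'
  -- numerator
  have haff : HasFDerivAt (fun A : Mat => P⁻¹ + A) (ContinuousLinearMap.id ℝ Mat) S :=
    (hasFDerivAt_id S).const_add P⁻¹
  have hinv : HasFDerivAt (fun A : Mat => (P⁻¹ + A)⁻¹)
      ((invDerivCLM X).comp (ContinuousLinearMap.id ℝ Mat)) S :=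
    (hasFDerivAt_matInv hX).comp S haff
  have hq : HasFDerivAt (fun A : Mat => μ ⬝ᵥ ((P⁻¹ + A)⁻¹ *ᵥ μ))
      ((vecQuadCLM μ).comp ((invDerivCLM X).comp (ContinuousLinearMap.id ℝ Mat))) S :=
    ((vecQuadCLM μ).hasFDerivAt).comp S hinv
  have hscl := hq.const_mul (-(1/2 : ℝ))
  have hexp := (Real.hasDerivAt_exp
      (-(1/2 : ℝ) * (μ ⬝ᵥ ((P⁻¹ + S)⁻¹ *ᵥ μ)))).comp_hasFDerivAt S hscl
  -- denominator
  have hlin : HasFDerivAt (fun A : Mat => 1 + A * P) (mulRightCLM P) S :=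
    ((mulRightCLM P).hasFDerivAt).const_add 1
  have hdet : HasFDerivAt (fun A : Mat => (1 + A * P).det)
      ((traceMulCLM (1 + S * P).adjugate).comp (mulRightCLM P)) S :=
    (hasFDerivAt_det (1 + S * P)).comp S hlin
  have hφ := (Real.hasDerivAt_sqrt hδ.ne').inv hs
  have hden := hφ.comp_hasFDerivAt S hdet
  have hprod := hexp.mul hden
  have hfun : (fun A : Mat => Real.exp ((fun A : Mat =>
        -(1/2 : ℝ) * (μ ⬝ᵥ ((P⁻¹ + A)⁻¹ *ᵥ μ))) A) * (Real.sqrt ((1 + A * P).det))⁻¹)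
      = fun A : Mat => gQE P μ A := by
    funext A
    simp only [gQE, div_eq_mul_inv]
  rw [show (Real.exp ∘ fun A : Mat => -(1/2 : ℝ) * (μ ⬝ᵥ ((P⁻¹ + A)⁻¹ *ᵥ μ)))
      = fun A : Mat => Real.exp (-(1/2 : ℝ) * (μ ⬝ᵥ ((P⁻¹ + A)⁻¹ *ᵥ μ))) from rfl] at hprod
  have hfun2 : (fun A : Mat => Real.exp (-(1/2 : ℝ) * (μ ⬝ᵥ ((P⁻¹ + A)⁻¹ *ᵥ μ)))
      * (Real.sqrt ((1 + A * P).det))⁻¹) = fun A : Mat => gQE P μ A := by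
    funext A; simp only [gQE, div_eq_mul_inv]
  replace hprod : HasFDerivAt (fun A : Mat => Real.exp (-(1/2 : ℝ) * (μ ⬝ᵥ ((P⁻¹ + A)⁻¹ *ᵥ μ)))
      * (Real.sqrt ((1 + A * P).det))⁻¹) _ S := hprod
  rw [hfun2] at hprod
  refine hprod.congr_fderiv ?_
  ext H
  set N : ℝ := Real.exp (-(1/2 : ℝ) * (μ ⬝ᵥ ((P⁻¹ + S)⁻¹ *ᵥ μ))) with hN
  have hquad : μ ⬝ᵥ ((Ψ * H * Ψ) *ᵥ μ) = v ⬝ᵥ (H *ᵥ v) := by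
    have h0 : (Ψ * H * Ψ) *ᵥ μ = Ψ *ᵥ (H *ᵥ (Ψ *ᵥ μ)) := by
      rw [← Matrix.mulVec_mulVec, ← Matrix.mulVec_mulVec]
    calc μ ⬝ᵥ ((Ψ * H * Ψ) *ᵥ μ) = (Ψᵀ *ᵥ μ) ⬝ᵥ (H *ᵥ (Ψ *ᵥ μ)) := by
          rw [h0, Matrix.dotProduct_mulVec, ← Matrix.mulVec_transpose]
      _ = v ⬝ᵥ (H *ᵥ v) := by rw [hΨ]
  have hXP : (1 : Mat) + S * P = X * P := by
    rw [hXdef, Matrix.add_mul, Matrix.nonsing_inv_mul P (isUnit_iff_ne_zero.mpr hP)]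
  have hadj : (1 + S * P).adjugate = δ • ((1 + S * P)⁻¹) := by
    have h1 : (1 + S * P)⁻¹ = δ⁻¹ • (1 + S * P).adjugate := inv_eq_global _
    rw [h1, smul_smul, mul_inv_cancel₀ hδ.ne', one_smul]
  have htr : ((1 + S * P).adjugate * (H * P)).trace = δ * (Ψ * H).trace := by
    have h2 : ((1 + S * P)⁻¹ * (H * P)).trace = (Ψ * H).trace := by
      rw [hXP, Matrix.mul_inv_rev]
      rw [show P⁻¹ * X⁻¹ * (H * P) = P⁻¹ * (X⁻¹ * H * P) by noncomm_ring]
      rw [Matrix.trace_mul_comm, show X⁻¹ * H * P * P⁻¹ = X⁻¹ * H * (P * P⁻¹) by noncomm_ring,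
        Matrix.mul_nonsing_inv P (isUnit_iff_ne_zero.mpr hP), Matrix.mul_one]
    rw [hadj, Matrix.smul_mul, Matrix.trace_smul, smul_eq_mul, h2]
  have hgval : gQE P μ S = N / Real.sqrt δ := rfl
  simp only [sigCLM_apply, ContinuousLinearMap.add_apply, ContinuousLinearMap.coe_smul',
    Pi.smul_apply, ContinuousLinearMap.coe_comp', Function.comp_apply,
    ContinuousLinearMap.smul_apply, ContinuousLinearMap.coe_id', id_eq, smul_eq_mul,
    vecQuadCLM_apply, mulRightCLM_apply, traceMulCLM_apply, invDerivCLM_apply]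
  rw [show (Ψ *ᵥ μ : Fin n → ℝ) = v from rfl]
  show Real.exp (-(1 / 2 : ℝ) * (μ ⬝ᵥ v)) * ((-(1 / (2 * Real.sqrt δ)) / Real.sqrt δ ^ 2) *
      ((1 + S * P).adjugate * (H * P)).trace) + (Real.sqrt ((1 + S * P).det))⁻¹ *
      (N * (-(1 / 2 : ℝ) * (μ ⬝ᵥ (-(Ψ * H * Ψ) *ᵥ μ)))) =
    (1 / 2 : ℝ) * gQE P μ S * ((Matrix.vecMulVec v v - Ψ) * H).trace
  rw [Matrix.neg_mulVec, dotProduct_neg, hquad, htr, hgval]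
  rw [Matrix.sub_mul, Matrix.trace_sub, trace_vecMulVec_mul]
  rw [show Real.exp (-(1/2 : ℝ) * (μ ⬝ᵥ (Ψ *ᵥ μ))) = N from rfl]
  rw [show (1 + S * P).det = δ from rfl]
  have hsq : Real.sqrt δ ^ 2 = δ := Real.sq_sqrt hδ.le
  rw [hsq]
  generalize v ⬝ᵥ (H *ᵥ v) = a
  generalize (Ψ * H).trace = t
  field_simp
  ring
end sigma

/-- Verification of the quantum Price relation for the quadratic-exponential moment:
`∂_μ² g = g (Ψμμᵀ Ψ - Ψ)`, `D_Σ g [H] = (1/2) g ⟨Ψμμᵀ Ψ - Ψ, H⟩`, hence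
`∂_μ² g = 2 ∂_Σ g`. -/
theorem quadratic_exponential_price_relation {n : ℕ} (μ : Fin n → ℝ)
    (S P : Matrix (Fin n) (Fin n) ℝ) (hS : S.PosDef) (hP : P.PosDef) :
    (∀ h₁ h₂ : Fin n → ℝ,
      fderiv ℝ (fun m => fderiv ℝ (fun m' => gQE P m' S) m h₂) μ h₁ =
        gQE P μ S *
          (h₁ ⬝ᵥ ((Matrix.vecMulVec ((P⁻¹ + S)⁻¹ *ᵥ μ) ((P⁻¹ + S)⁻¹ *ᵥ μ) -
            (P⁻¹ + S)⁻¹) *ᵥ h₂))) ∧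
    ∃ L : symMatrices n →L[ℝ] ℝ,
      HasFDerivAt (fun A : symMatrices n => gQE P μ (A : Matrix (Fin n) (Fin n) ℝ))
        L ⟨S, hS.mem_symMatrices⟩ ∧
      (∀ H : symMatrices n,
        L H = (1 / 2 : ℝ) * gQE P μ S *
          Matrix.trace ((Matrix.vecMulVec ((P⁻¹ + S)⁻¹ *ᵥ μ) ((P⁻¹ + S)⁻¹ *ᵥ μ) -
            (P⁻¹ + S)⁻¹) * (H : Matrix (Fin n) (Fin n) ℝ))) ∧
      (∀ H : symMatrices n,
        ∑ i : Fin n, ∑ j : Fin n, (H : Matrix (Fin n) (Fin n) ℝ) i j *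
            hessianMatrix (fun m => gQE P m S) μ i j = 2 * L H) := by
  -- basic positivity facts
  have hXpd : (P⁻¹ + S).PosDef := hP.inv.add hS
  have hXdet : (P⁻¹ + S).det ≠ 0 := hXpd.det_pos.ne'
  have hPdet : P.det ≠ 0 := hP.det_pos.ne'
  have hΨ : ((P⁻¹ + S)⁻¹)ᵀ = (P⁻¹ + S)⁻¹ := by
    have hXsymm : (P⁻¹ + S)ᵀ = (P⁻¹ + S) := by
      have h := hXpd.isHermitian
      rwa [Matrix.IsHermitian, Matrix.conjTranspose_eq_transpose_of_trivial] at h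
    rw [Matrix.transpose_nonsing_inv, hXsymm]
  have hXP : (1 : Matrix (Fin n) (Fin n) ℝ) + S * P = (P⁻¹ + S) * P := by
    rw [Matrix.add_mul, Matrix.nonsing_inv_mul P (isUnit_iff_ne_zero.mpr hPdet)]
  have hδ : 0 < (1 + S * P).det := by
    rw [hXP, Matrix.det_mul]
    exact mul_pos hXpd.det_pos hP.det_pos
  refine ⟨fun h₁ h₂ => mu_second_deriv P S hΨ μ h₁ h₂, ?_⟩
  refine ⟨(sigCLM P μ S).comp (symMatrices n).subtypeL, ?_, ?_, ?_⟩
  · have hincl : HasFDerivAt (fun A : symMatrices n => (A : Matrix (Fin n) (Fin n) ℝ))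
        ((symMatrices n).subtypeL) ⟨S, hS.mem_symMatrices⟩ :=
      ((symMatrices n).subtypeL).hasFDerivAt
    exact (sigma_hasFDerivAt P μ S hXdet hPdet hδ hΨ).comp _ hincl
  · intro H
    rfl
  · intro H
    set Ψ : Matrix (Fin n) (Fin n) ℝ := (P⁻¹ + S)⁻¹ with hΨdef
    set v : Fin n → ℝ := Ψ *ᵥ μ with hv
    set K : Matrix (Fin n) (Fin n) ℝ := Matrix.vecMulVec v v - Ψ with hK
    have hHsymm : ∀ i j, (H : Matrix (Fin n) (Fin n) ℝ) j i
        = (H : Matrix (Fin n) (Fin n) ℝ) i j := by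
      intro i j
      have h := H.2
      exact (congrFun (congrFun h j) i).symm ▸ rfl
    have hhess : ∀ i j, hessianMatrix (fun m => gQE P m S) μ i j = gQE P μ S * K i j := by
      intro i j
      have h := mu_second_deriv P S hΨ μ (Pi.single i 1) (Pi.single j 1)
      rw [hessianMatrix]
      rw [Matrix.of_apply, h]
      congr 1
      have h1 : K *ᵥ Pi.single j 1 = fun k => K k j := by
        ext k
        simp [Matrix.mulVec_single]
      rw [h1]
      simp [dotProduct, Pi.single_apply]
    have hL : ((sigCLM P μ S).comp (symMatrices n).subtypeL) H
        = (1 / 2 : ℝ) * gQE P μ S * (K * (H : Matrix (Fin n) (Fin n) ℝ)).trace := rfl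
    rw [hL]
    have htr : (K * (H : Matrix (Fin n) (Fin n) ℝ)).trace
        = ∑ i, ∑ j, K i j * (H : Matrix (Fin n) (Fin n) ℝ) i j := by
      rw [Matrix.trace]
      simp only [Matrix.diag, Matrix.mul_apply]
      exact Finset.sum_congr rfl fun i _ => Finset.sum_congr rfl fun j _ => by
        rw [hHsymm i j]
    rw [htr]
    simp only [hhess]
    simp only [Finset.mul_sum]
    refine Finset.sum_congr rfl fun i _ => ?_
    refine Finset.sum_congr rfl fun j _ => by ring
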